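/- Suppose X has a Lebesgue density f_X supported on [0,1]. Then Z has a Lebesgue density f_Z given, for almost every s ∈ [−1,1], by f_Z(s) = (1/(2√2)) ∫₀^{(1+s)/2} f_X(x) / √((1+s−2x)(1−x)) dx (and f_Z vanishes outside [−1,1]). -/

import Mathlib

open MeasureTheory
open scoped ENNReal

namespace DensityZAux

/-- The kernel function. -/
noncomputable def kk (x s : ℝ) : ℝ :=
  1 / (2 * Real.sqrt 2 * Real.sqrt ((1 - x) * (1 + s - 2 * x)))

lemma kk_nonneg (x s : ℝ) : 0 ≤ kk x s := by
  unfold kk; positivity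

set_option maxHeartbeats 1000000 in
lemma kk_meas : Measurable (fun p : ℝ × ℝ => kk p.1 p.2) := by
  simp only [kk]
  have h : Measurable fun p : ℝ × ℝ =>
      2 * Real.sqrt 2 * Real.sqrt ((1 - p.1) * (1 + p.2 - 2 * p.1)) := by fun_prop
  exact measurable_const.div h

set_option maxHeartbeats 1000000 in
lemma kk_meas_right (x : ℝ) : Measurable (fun s : ℝ => kk x s) := by
  simp only [kk]
  have h : Measurable fun s : ℝ =>
      2 * Real.sqrt 2 * Real.sqrt ((1 - x) * (1 + s - 2 * x)) := by fun_prop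
  exact measurable_const.div h

/-- 1D change of variables for lower Lebesgue integrals. -/
lemma lintegral_image_abs_deriv {s : Set ℝ} {f f' : ℝ → ℝ} (hs : MeasurableSet s)
    (hf' : ∀ x ∈ s, HasDerivWithinAt f (f' x) s x) (hf : Set.InjOn f s) (g : ℝ → ℝ≥0∞) :
    ∫⁻ x in f '' s, g x = ∫⁻ x in s, ENNReal.ofReal |f' x| * g (f x) := by
  simpa only [ContinuousLinearMap.det_toSpanSingleton] using
    lintegral_image_eq_lintegral_abs_det_fderiv_mul volume hs
      (fun x hx => (hf' x hx).hasFDerivWithinAt) hf g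

lemma hasDeriv_phi {x s : ℝ} (hx1 : x < 1) (hs : 2 * x - 1 < s) :
    HasDerivAt (fun s : ℝ => Real.sqrt ((s - (2 * x - 1)) / (2 - 2 * x))) (kk x s) s := by
  have hc : (0:ℝ) < 2 - 2 * x := by linarith
  have hnum : (0:ℝ) < s - (2 * x - 1) := by linarith
  have hu : 0 < (s - (2 * x - 1)) / (2 - 2 * x) := div_pos hnum hc
  have h1 : HasDerivAt (fun s : ℝ => (s - (2 * x - 1)) / (2 - 2 * x)) (1 / (2 - 2 * x)) s := by
    simpa using ((hasDerivAt_id s).sub_const (2 * x - 1)).div_const (2 - 2 * x)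
  have h2 := (Real.hasDerivAt_sqrt hu.ne').comp s h1
  refine h2.congr_deriv (Eq.symm ?_)
  have e1 : Real.sqrt ((s - (2 * x - 1)) / (2 - 2 * x))
      = Real.sqrt (s - (2 * x - 1)) / Real.sqrt (2 - 2 * x) :=
    Real.sqrt_div hnum.le _
  have e2 : Real.sqrt ((1 - x) * (1 + s - 2 * x))
      = Real.sqrt (1 - x) * Real.sqrt (1 + s - 2 * x) := Real.sqrt_mul (by linarith) _
  have e3 : Real.sqrt (2 - 2 * x) = Real.sqrt 2 * Real.sqrt (1 - x) := by
    rw [show (2:ℝ) - 2 * x = 2 * (1 - x) by ring, Real.sqrt_mul (by norm_num)]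
  have e4 : (1:ℝ) + s - 2 * x = s - (2 * x - 1) := by ring
  have ha : (0:ℝ) < Real.sqrt 2 := Real.sqrt_pos.mpr (by norm_num)
  have hb : (0:ℝ) < Real.sqrt (1 - x) := Real.sqrt_pos.mpr (by linarith)
  have hd : (0:ℝ) < Real.sqrt (s - (2 * x - 1)) := Real.sqrt_pos.mpr hnum
  have h2x : (2:ℝ) - 2 * x = Real.sqrt 2 ^ 2 * Real.sqrt (1 - x) ^ 2 := by
    rw [Real.sq_sqrt (by norm_num : (0:ℝ) ≤ 2), Real.sq_sqrt (by linarith : (0:ℝ) ≤ 1 - x)]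
    ring
  rw [kk, e2, e4, e1, e3, h2x]
  field_simp

lemma injOn_phi {x : ℝ} (hx1 : x < 1) :
    Set.InjOn (fun s : ℝ => Real.sqrt ((s - (2 * x - 1)) / (2 - 2 * x)))
      (Set.Ioi (2 * x - 1)) := by
  have hc : (0:ℝ) < 2 - 2 * x := by linarith
  intro a ha b hb h
  simp only [Set.mem_Ioi] at ha hb
  have ha' : 0 ≤ (a - (2 * x - 1)) / (2 - 2 * x) := le_of_lt (div_pos (by linarith) hc)
  have hb' : 0 ≤ (b - (2 * x - 1)) / (2 - 2 * x) := le_of_lt (div_pos (by linarith) hc)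
  have h2 := (Real.sqrt_inj ha' hb').mp h
  field_simp [hc.ne', show (1:ℝ) - x ≠ 0 by linarith] at h2
  linarith

/-- The key slice computation: the conditional law of `Z` given `X = x`. -/
lemma slice {x : ℝ} (hx0 : 0 ≤ x) (hx1 : x < 1) {A : Set ℝ} (hA : MeasurableSet A) :
    (2 : ℝ≥0∞)⁻¹ *
        volume ((fun t : ℝ => t ^ 2 + (1 - t ^ 2) * (2 * x - 1)) ⁻¹' A ∩ Set.Icc (-1 : ℝ) 1)
      = ∫⁻ s in A, (if 2 * x - 1 < s ∧ s < 1 then ENNReal.ofReal (kk x s) else 0) := by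
  have hc : (0:ℝ) < 2 - 2 * x := by linarith
  set ψ : ℝ → ℝ := fun t => t ^ 2 + (1 - t ^ 2) * (2 * x - 1) with hψ
  have hψm : Measurable ψ := by fun_prop
  set φ : ℝ → ℝ := fun s => Real.sqrt ((s - (2 * x - 1)) / (2 - 2 * x)) with hφ
  set B : Set ℝ := ψ ⁻¹' A with hB
  have hBmeas : MeasurableSet B := hψm hA
  -- the image identity
  have himg : B ∩ Set.Ioo (0:ℝ) 1 = φ '' (A ∩ Set.Ioo (2 * x - 1) 1) := by
    ext t
    constructor
    · rintro ⟨htA, ht0, ht1⟩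
      refine ⟨ψ t, ⟨htA, ?_, ?_⟩, ?_⟩
      · show 2 * x - 1 < t ^ 2 + (1 - t ^ 2) * (2 * x - 1)
        nlinarith [mul_pos hc (pow_pos ht0 2)]
      · show t ^ 2 + (1 - t ^ 2) * (2 * x - 1) < 1
        have h1 : (0:ℝ) < 1 - t ^ 2 := by nlinarith
        nlinarith [mul_pos hc h1]
      · show Real.sqrt ((ψ t - (2 * x - 1)) / (2 - 2 * x)) = t
        have : (ψ t - (2 * x - 1)) / (2 - 2 * x) = t ^ 2 := by
          rw [div_eq_iff hc.ne']; simp only [hψ]; ring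
        rw [this, Real.sqrt_sq ht0.le]
    · rintro ⟨s, ⟨hsA, hs1, hs2⟩, rfl⟩
      have hu : 0 < (s - (2 * x - 1)) / (2 - 2 * x) := div_pos (by linarith) hc
      have hu1 : (s - (2 * x - 1)) / (2 - 2 * x) < 1 := (div_lt_one hc).mpr (by linarith)
      have hψφ : ψ (φ s) = s := by
        show (Real.sqrt _) ^ 2 + (1 - (Real.sqrt _) ^ 2) * (2 * x - 1) = s
        rw [Real.sq_sqrt hu.le]
        field_simp [show (1:ℝ) - x ≠ 0 by linarith]
        ring
      refine ⟨?_, Real.sqrt_pos.mpr hu, ?_⟩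
      · show ψ (φ s) ∈ A; rwa [hψφ]
      · calc φ s < Real.sqrt 1 := Real.sqrt_lt_sqrt hu.le hu1
          _ = 1 := Real.sqrt_one
  -- symmetry of the negative part
  have hneg : B ∩ Set.Ioo (-1:ℝ) 0 = -(B ∩ Set.Ioo (0:ℝ) 1) := by
    ext t
    simp only [Set.mem_inter_iff, Set.mem_neg, Set.mem_Ioo, hB, Set.mem_preimage, hψ, neg_sq]
    constructor <;> rintro ⟨h1, h2, h3⟩ <;> exact ⟨h1, by linarith, by linarith⟩
  -- splitting the measure
  have htriple : volume ({-1, 0, 1} : Set ℝ) = 0 :=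
    (Set.toFinite _).countable.measure_zero _
  have hsplit : volume (B ∩ Set.Icc (-1:ℝ) 1)
      = 2 * volume (B ∩ Set.Ioo (0:ℝ) 1) := by
    have hle : volume (B ∩ Set.Icc (-1:ℝ) 1)
        ≤ volume (B ∩ Set.Ioo (-1:ℝ) 0) + volume (B ∩ Set.Ioo (0:ℝ) 1) := by
      have hsub : B ∩ Set.Icc (-1:ℝ) 1
          ⊆ (B ∩ Set.Ioo (-1:ℝ) 0) ∪ ((B ∩ Set.Ioo (0:ℝ) 1) ∪ ({-1, 0, 1} : Set ℝ)) := by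
        rintro t ⟨htB, ht1, ht2⟩
        rcases lt_trichotomy t 0 with h | h | h
        · rcases eq_or_lt_of_le ht1 with h' | h'
          · exact Or.inr (Or.inr (by simp [← h']))
          · exact Or.inl ⟨htB, h', h⟩
        · exact Or.inr (Or.inr (by simp [h]))
        · rcases eq_or_lt_of_le ht2 with h' | h'
          · exact Or.inr (Or.inr (by simp [h']))
          · exact Or.inr (Or.inl ⟨htB, h, h'⟩)
      calc volume (B ∩ Set.Icc (-1:ℝ) 1)
          ≤ volume (B ∩ Set.Ioo (-1:ℝ) 0)
            + volume ((B ∩ Set.Ioo (0:ℝ) 1) ∪ ({-1, 0, 1} : Set ℝ)) :=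
            le_trans (measure_mono hsub) (measure_union_le _ _)
        _ ≤ volume (B ∩ Set.Ioo (-1:ℝ) 0)
            + (volume (B ∩ Set.Ioo (0:ℝ) 1) + volume ({-1, 0, 1} : Set ℝ)) := by
            gcongr; exact measure_union_le _ _
        _ = volume (B ∩ Set.Ioo (-1:ℝ) 0) + volume (B ∩ Set.Ioo (0:ℝ) 1) := by
            rw [htriple, add_zero]
    have hge : volume (B ∩ Set.Ioo (-1:ℝ) 0) + volume (B ∩ Set.Ioo (0:ℝ) 1)
        ≤ volume (B ∩ Set.Icc (-1:ℝ) 1) := by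
      rw [← measure_union ?_ (hBmeas.inter measurableSet_Ioo)]
      · apply measure_mono
        rintro t (⟨htB, h1, h2⟩ | ⟨htB, h1, h2⟩) <;>
          exact ⟨htB, by constructor <;> linarith⟩
      · refine Set.disjoint_left.mpr ?_
        rintro t ⟨_, _, h2⟩ ⟨_, h3, _⟩
        linarith
    have heq : volume (B ∩ Set.Ioo (-1:ℝ) 0) = volume (B ∩ Set.Ioo (0:ℝ) 1) := by
      rw [hneg, Measure.measure_neg]
    rw [heq] at hle hge
    rw [two_mul]
    exact le_antisymm hle hge
  -- change of variables on the positive part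
  have hS : MeasurableSet (A ∩ Set.Ioo (2 * x - 1) 1) := hA.inter measurableSet_Ioo
  have hderiv : ∀ s ∈ A ∩ Set.Ioo (2 * x - 1) 1,
      HasDerivWithinAt φ (kk x s) (A ∩ Set.Ioo (2 * x - 1) 1) s := fun s hs =>
    (hasDeriv_phi hx1 hs.2.1).hasDerivWithinAt
  have hinj : Set.InjOn φ (A ∩ Set.Ioo (2 * x - 1) 1) :=
    (injOn_phi hx1).mono (fun s hs => hs.2.1)
  have hpos : volume (B ∩ Set.Ioo (0:ℝ) 1)
      = ∫⁻ s in A ∩ Set.Ioo (2 * x - 1) 1, ENNReal.ofReal (kk x s) := by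
    rw [himg, ← setLIntegral_one, lintegral_image_abs_deriv hS hderiv hinj]
    refine setLIntegral_congr_fun hS (fun s _ => ?_)
    rw [mul_one, abs_of_nonneg (kk_nonneg x s)]
  -- put everything together
  rw [hsplit, ← mul_assoc, ENNReal.inv_mul_cancel (by norm_num) (by norm_num), one_mul, hpos]
  have : ∀ s : ℝ, (if 2 * x - 1 < s ∧ s < 1 then ENNReal.ofReal (kk x s) else 0)
      = Set.indicator (Set.Ioo (2 * x - 1) 1) (fun s => ENNReal.ofReal (kk x s)) s := by
    intro s; simp [Set.indicator_apply, Set.mem_Ioo]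
  simp_rw [this]
  rw [lintegral_indicator measurableSet_Ioo, Measure.restrict_restrict measurableSet_Ioo,
    Set.inter_comm]

set_option maxHeartbeats 1000000 in
lemma kk_meas_left (s : ℝ) : Measurable (fun x : ℝ => kk x s) := by
  simp only [kk]
  have h : Measurable fun x : ℝ =>
      2 * Real.sqrt 2 * Real.sqrt ((1 - x) * (1 + s - 2 * x)) := by fun_prop
  exact measurable_const.div h

/-- The joint kernel. -/
noncomputable def KK (fX : ℝ → ℝ) (x s : ℝ) : ℝ≥0∞ :=
  ENNReal.ofReal (fX x) *
    (if 2 * x - 1 < s ∧ s < 1 then ENNReal.ofReal (kk x s) else 0)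

/-- The candidate density. -/
noncomputable def GG (fX : ℝ → ℝ) (s : ℝ) : ℝ≥0∞ := ∫⁻ x, KK fX x s

lemma ite_meas (x : ℝ) :
    Measurable (fun s : ℝ => if 2 * x - 1 < s ∧ s < 1 then ENNReal.ofReal (kk x s) else 0) := by
  refine Measurable.ite ?_ (kk_meas_right x).ennreal_ofReal measurable_const
  exact (measurableSet_lt measurable_const measurable_id).inter
    (measurableSet_lt measurable_id measurable_const)

lemma KK_meas {fX : ℝ → ℝ} (hfX : Measurable fX) :
    Measurable (fun p : ℝ × ℝ => KK fX p.1 p.2) := by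
  unfold KK
  refine Measurable.mul (hfX.comp measurable_fst).ennreal_ofReal ?_
  refine Measurable.ite ?_ kk_meas.ennreal_ofReal measurable_const
  exact (measurableSet_lt (by fun_prop) measurable_snd).inter
    (measurableSet_lt measurable_snd measurable_const)

lemma GG_meas {fX : ℝ → ℝ} (hfX : Measurable fX) : Measurable (GG fX) :=
  (KK_meas hfX).lintegral_prod_left'

/-- Identification of `GG fX` with the stated density, away from `s = ±1`. -/
lemma stepB {fX : ℝ → ℝ} (hfX_meas : Measurable fX) (hfX_nonneg : ∀ x, 0 ≤ fX x)
    (hfX_supp : ∀ x, x ∉ Set.Icc (0:ℝ) 1 → fX x = 0) {s : ℝ}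
    (hs1 : s ≠ 1) (hsm1 : s ≠ -1) (hfin : GG fX s ≠ ⊤) :
    GG fX s = ENNReal.ofReal
      (if s ∈ Set.Icc (-1 : ℝ) 1 then
        (1 / (2 * Real.sqrt 2)) *
          ∫ x in (0 : ℝ)..((1 + s) / 2), fX x / Real.sqrt ((1 + s - 2 * x) * (1 - x))
      else 0) := by
  by_cases hmem : s ∈ Set.Icc (-1:ℝ) 1
  · have hsl : -1 < s := lt_of_le_of_ne hmem.1 (Ne.symm hsm1)
    have hsr : s < 1 := lt_of_le_of_ne hmem.2 hs1
    have hhalf0 : (0:ℝ) < (1 + s) / 2 := by linarith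
    have hhalf1 : (1 + s) / 2 < 1 := by linarith
    have hKind : ∀ x, KK fX x s
        = ENNReal.ofReal ((Set.Ico (0:ℝ) ((1 + s) / 2)).indicator
            (fun x => fX x * kk x s) x) := by
      intro x
      rcases lt_or_ge x 0 with h | h
      · have hfx0 : fX x = 0 := hfX_supp x (by simp [Set.mem_Icc]; intro h'; linarith)
        have : x ∉ Set.Ico (0:ℝ) ((1 + s) / 2) := by simp [Set.mem_Ico]; intro h'; linarith
        simp [KK, hfx0, Set.indicator_of_notMem this]
      · rcases lt_or_ge x ((1 + s) / 2) with h2 | h2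
        · have hcond : 2 * x - 1 < s ∧ s < 1 := ⟨by linarith, hsr⟩
          rw [KK, if_pos hcond,
            Set.indicator_of_mem (Set.mem_Ico.mpr ⟨h, h2⟩),
            ENNReal.ofReal_mul (hfX_nonneg x)]
        · have hcond : ¬(2 * x - 1 < s ∧ s < 1) := fun h3 => absurd h3.1 (by linarith)
          have hnm : x ∉ Set.Ico (0:ℝ) ((1 + s) / 2) := by
            simp [Set.mem_Ico]; intro h'; linarith
          rw [KK, if_neg hcond, mul_zero, Set.indicator_of_notMem hnm, ENNReal.ofReal_zero]
    set ind := (Set.Ico (0:ℝ) ((1 + s) / 2)).indicator (fun x => fX x * kk x s) with hind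
    have hind_meas : Measurable ind :=
      (hfX_meas.mul (kk_meas_left s)).indicator measurableSet_Ico
    have hind_nonneg : ∀ x, 0 ≤ ind x := fun x =>
      Set.indicator_nonneg (fun y _ => mul_nonneg (hfX_nonneg y) (kk_nonneg y s)) x
    have hlin : GG fX s = ∫⁻ x, ENNReal.ofReal (ind x) := lintegral_congr fun x => hKind x
    have hfin' : ∫⁻ x, ENNReal.ofReal (ind x) < ⊤ := hlin ▸ hfin.lt_top
    have hInt : Integrable ind := by
      refine ⟨hind_meas.aestronglyMeasurable, ?_⟩
      rw [hasFiniteIntegral_iff_ofReal (Filter.Eventually.of_forall hind_nonneg)]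
      exact hfin'
    have hofReal : ENNReal.ofReal (∫ x, ind x) = ∫⁻ x, ENNReal.ofReal (ind x) :=
      ofReal_integral_eq_lintegral_ofReal hInt (Filter.Eventually.of_forall hind_nonneg)
    rw [hlin, ← hofReal, if_pos hmem]
    congr 1
    rw [hind, MeasureTheory.integral_indicator measurableSet_Ico,
      intervalIntegral.integral_of_le hhalf0.le, ← MeasureTheory.integral_const_mul,
      MeasureTheory.integral_Ico_eq_integral_Ioo, MeasureTheory.integral_Ioc_eq_integral_Ioo]
    refine setIntegral_congr_fun measurableSet_Ioo fun x _ => ?_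
    rw [kk, mul_comm (1 + s - 2 * x) (1 - x), mul_one_div, div_mul_div_comm, one_mul]
  · rw [if_neg hmem, ENNReal.ofReal_zero]
    have hKzero : ∀ x, KK fX x s = 0 := by
      intro x
      rcases not_and_or.mp ((Set.mem_Icc).not.mp hmem) with h | h
      · push_neg at h
        by_cases h2 : 2 * x - 1 < s ∧ s < 1
        · have hfx0 : fX x = 0 := hfX_supp x (by
            simp [Set.mem_Icc]; intro h'; nlinarith [h2.1])
          simp [KK, hfx0]
        · simp [KK, if_neg h2]
      · push_neg at h
        have h2 : ¬(2 * x - 1 < s ∧ s < 1) := fun h3 => absurd h3.2 (by linarith)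
        simp [KK, if_neg h2]
    rw [GG, lintegral_congr hKzero, lintegral_zero]

end DensityZAux

open DensityZAux

/-- Let `X` take values in `[0,1]` with Lebesgue density `f_X` supported on `[0,1]`, let
`T` be uniform on `[-1,1]` and independent of `X`, and set
`Z = T² + (1 - T²)(2X - 1)`.  Then `Z` has the Lebesgue density
`f_Z(s) = (1/(2√2)) ∫₀^{(1+s)/2} f_X(x)/√((1+s-2x)(1-x)) dx` on `[-1,1]`
(vanishing outside `[-1,1]`). -/
theorem density_of_Z
    {Ω : Type*} [MeasurableSpace Ω] (P : Measure Ω) [IsProbabilityMeasure P]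
    (X T : Ω → ℝ) (hX : Measurable X) (hT : Measurable T)
    (hX_range : ∀ ω, X ω ∈ Set.Icc (0 : ℝ) 1)
    (hT_unif : Measure.map T P = (2 : ℝ≥0∞)⁻¹ • volume.restrict (Set.Icc (-1 : ℝ) 1))
    (hindep : ProbabilityTheory.IndepFun X T P)
    (fX : ℝ → ℝ) (hfX_meas : Measurable fX) (hfX_nonneg : ∀ x, 0 ≤ fX x)
    (hfX_supp : ∀ x, x ∉ Set.Icc (0 : ℝ) 1 → fX x = 0)
    (hX_law : Measure.map X P = volume.withDensity fun x => ENNReal.ofReal (fX x)) :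
    Measure.map (fun ω => T ω ^ 2 + (1 - T ω ^ 2) * (2 * X ω - 1)) P =
      volume.withDensity fun s => ENNReal.ofReal
        (if s ∈ Set.Icc (-1 : ℝ) 1 then
          (1 / (2 * Real.sqrt 2)) *
            ∫ x in (0 : ℝ)..((1 + s) / 2), fX x / Real.sqrt ((1 + s - 2 * x) * (1 - x))
        else 0) := by
  classical
  have hgm : Measurable (fun p : ℝ × ℝ => p.2 ^ 2 + (1 - p.2 ^ 2) * (2 * p.1 - 1)) := by
    fun_prop
  set g : ℝ × ℝ → ℝ := fun p => p.2 ^ 2 + (1 - p.2 ^ 2) * (2 * p.1 - 1) with hgdef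
  haveI : IsProbabilityMeasure (Measure.map X P) := Measure.isProbabilityMeasure_map hX.aemeasurable
  haveI : IsProbabilityMeasure (Measure.map T P) := Measure.isProbabilityMeasure_map hT.aemeasurable
  have hprod : Measure.map (fun ω => (X ω, T ω)) P
      = (Measure.map X P).prod (Measure.map T P) :=
    (ProbabilityTheory.indepFun_iff_map_prod_eq_prod_map_map
      hX.aemeasurable hT.aemeasurable).mp hindep
  have hmapZ : Measure.map (fun ω => T ω ^ 2 + (1 - T ω ^ 2) * (2 * X ω - 1)) P
      = Measure.map g ((Measure.map X P).prod (Measure.map T P)) := by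
    rw [← hprod, Measure.map_map hgm (hX.prodMk hT)]
    rfl
  have hψm : ∀ x : ℝ, Measurable (fun t : ℝ => t ^ 2 + (1 - t ^ 2) * (2 * x - 1)) := by
    intro x; fun_prop
  -- Main identification of the law as a measure with density `GG fX`.
  have hmain : Measure.map g ((Measure.map X P).prod (Measure.map T P))
      = volume.withDensity (GG fX) := by
    ext A hA
    rw [Measure.map_apply hgm hA, Measure.prod_apply (hgm hA), withDensity_apply _ hA]
    have hmeasx : Measurable fun x => Measure.map T P (Prod.mk x ⁻¹' (g ⁻¹' A)) :=
      measurable_measure_prodMk_left (hgm hA)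
    calc ∫⁻ x, Measure.map T P (Prod.mk x ⁻¹' (g ⁻¹' A)) ∂(Measure.map X P)
        = ∫⁻ x, ENNReal.ofReal (fX x) * Measure.map T P (Prod.mk x ⁻¹' (g ⁻¹' A)) := by
          rw [hX_law, lintegral_withDensity_eq_lintegral_mul _
            hfX_meas.ennreal_ofReal hmeasx]
          rfl
      _ = ∫⁻ x, ∫⁻ s in A, KK fX x s := by
          have hae : ∀ᵐ x : ℝ, x ≠ 1 := by
            refine ae_iff.mpr ?_
            simpa using measure_singleton (1:ℝ)
          refine lintegral_congr_ae (hae.mono fun x hx => ?_)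
          dsimp only
          by_cases hx0 : 0 ≤ x ∧ x < 1
          · have hpre : Prod.mk x ⁻¹' (g ⁻¹' A)
                = (fun t : ℝ => t ^ 2 + (1 - t ^ 2) * (2 * x - 1)) ⁻¹' A := rfl
            rw [hpre, hT_unif, Measure.smul_apply, Measure.restrict_apply (hψm x hA),
              smul_eq_mul, slice hx0.1 hx0.2 hA, ← lintegral_const_mul _ (ite_meas x)]
            simp only [KK]
          · have hfx0 : fX x = 0 := by
              refine hfX_supp x fun hmem => ?_
              exact hx0 ⟨hmem.1, lt_of_le_of_ne hmem.2 hx⟩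
            simp [KK, hfx0]
      _ = ∫⁻ s in A, ∫⁻ x, KK fX x s := lintegral_lintegral_swap (KK_meas hfX_meas).aemeasurable
      _ = ∫⁻ s in A, GG fX s := rfl
  rw [hmapZ, hmain]
  refine withDensity_congr_ae ?_
  haveI : IsProbabilityMeasure (Measure.map g ((Measure.map X P).prod (Measure.map T P))) :=
    Measure.isProbabilityMeasure_map hgm.aemeasurable
  have htot : ∫⁻ s, GG fX s = 1 := by
    calc ∫⁻ s, GG fX s = volume.withDensity (GG fX) Set.univ := by
          rw [withDensity_apply _ MeasurableSet.univ, Measure.restrict_univ]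
      _ = Measure.map g ((Measure.map X P).prod (Measure.map T P)) Set.univ := by rw [hmain]
      _ = 1 := measure_univ
  have hfin : ∀ᵐ s : ℝ, GG fX s ≠ ⊤ :=
    (ae_lt_top (GG_meas hfX_meas) (htot ▸ ENNReal.one_ne_top)).mono fun s h => h.ne
  have hne1 : ∀ᵐ s : ℝ, s ≠ 1 := by
    refine ae_iff.mpr ?_
    simpa using measure_singleton (1:ℝ)
  have hnem1 : ∀ᵐ s : ℝ, s ≠ -1 := by
    refine ae_iff.mpr ?_
    simpa using measure_singleton (-1:ℝ)
  filter_upwards [hfin, hne1, hnem1] with s h1 h2 h3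
  exact stepB hfX_meas hfX_nonneg hfX_supp h2 h3 h1
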